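/- Let V be a finite set, let w : V → ℝ_{≥0}, let {ū_v}_{v∈V} be nonzero vectors in a real inner product space with ⟨ū_u, ū_v⟩ ≥ 0 for all u, v, and fix u ∈ V with ∑_{v∈V} w(v)·⟨ū_u, ū_v⟩ = 1. Let β ∈ (0,1] and let A_u = { v ∈ V : ⟨ū_u, ū_v⟩ / max{‖ū_u‖², ‖ū_v‖²} ≥ β }. Then ∑_{v∈A_u} w(v)·‖ū_v‖² ≤ 1/β. -/

import Mathlib

open Finset
open scoped RealInnerProductSpace

theorem stmt7 {V : Type*} [Fintype V] [DecidableEq V]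
    {F : Type*} [NormedAddCommGroup F] [InnerProductSpace ℝ F]
    (w : V → ℝ) (hw : ∀ v, 0 ≤ w v)
    (ub : V → F) (hub : ∀ v, ub v ≠ 0)
    (hpos : ∀ u v : V, 0 ≤ ⟪ub u, ub v⟫)
    (u : V) (hu : ∑ v, w v * ⟪ub u, ub v⟫ = 1)
    (β : ℝ) (hβ : β ∈ Set.Ioc (0 : ℝ) 1) :
    ∑ v ∈ Finset.univ.filter
        (fun v => β ≤ ⟪ub u, ub v⟫ / max (‖ub u‖ ^ 2) (‖ub v‖ ^ 2)),
      w v * ‖ub v‖ ^ 2 ≤ 1 / β := by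
  obtain ⟨hβ0, hβ1⟩ := hβ
  have key : ∀ v ∈ Finset.univ.filter
      (fun v => β ≤ ⟪ub u, ub v⟫ / max (‖ub u‖ ^ 2) (‖ub v‖ ^ 2)),
      w v * ‖ub v‖ ^ 2 ≤ (1 / β) * (w v * ⟪ub u, ub v⟫) := by
    intro v hv
    rw [Finset.mem_filter] at hv
    have hmax : (0:ℝ) < max (‖ub u‖ ^ 2) (‖ub v‖ ^ 2) := by
      have hn : (0:ℝ) < ‖ub v‖ := norm_pos_iff.mpr (hub v)
      have : (0:ℝ) < ‖ub v‖ ^ 2 := by positivity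
      exact lt_max_of_lt_right this
    have h1 : β * max (‖ub u‖ ^ 2) (‖ub v‖ ^ 2) ≤ ⟪ub u, ub v⟫ := by
      rw [le_div_iff₀ hmax] at hv; linarith [hv.2]
    have h2 : β * ‖ub v‖ ^ 2 ≤ ⟪ub u, ub v⟫ := by
      have := mul_le_mul_of_nonneg_left (le_max_right (‖ub u‖ ^ 2) (‖ub v‖ ^ 2)) hβ0.le
      linarith
    have h3 : w v * (β * ‖ub v‖ ^ 2) ≤ w v * ⟪ub u, ub v⟫ :=
      mul_le_mul_of_nonneg_left h2 (hw v)
    rw [← sub_nonneg]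
    have : (1 / β) * (w v * ⟪ub u, ub v⟫) - w v * ‖ub v‖ ^ 2
        = (1 / β) * (w v * ⟪ub u, ub v⟫ - w v * (β * ‖ub v‖ ^ 2)) := by
      field_simp
    rw [this]
    exact mul_nonneg (by positivity) (by linarith)
  calc ∑ v ∈ Finset.univ.filter
        (fun v => β ≤ ⟪ub u, ub v⟫ / max (‖ub u‖ ^ 2) (‖ub v‖ ^ 2)),
      w v * ‖ub v‖ ^ 2
      ≤ ∑ v ∈ Finset.univ.filter
        (fun v => β ≤ ⟪ub u, ub v⟫ / max (‖ub u‖ ^ 2) (‖ub v‖ ^ 2)),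
        (1 / β) * (w v * ⟪ub u, ub v⟫) := Finset.sum_le_sum key
    _ = (1 / β) * ∑ v ∈ Finset.univ.filter
        (fun v => β ≤ ⟪ub u, ub v⟫ / max (‖ub u‖ ^ 2) (‖ub v‖ ^ 2)),
        w v * ⟪ub u, ub v⟫ := by rw [Finset.mul_sum]
    _ ≤ (1 / β) * ∑ v, w v * ⟪ub u, ub v⟫ := by
        apply mul_le_mul_of_nonneg_left _ (by positivity)
        exact Finset.sum_le_sum_of_subset_of_nonneg (Finset.filter_subset _ _)
          (fun v _ _ => mul_nonneg (hw v) (hpos u v))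
    _ = 1 / β := by rw [hu, mul_one]
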